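/- Let (X, 𝓕, μ) be a probability space and T : X → X a measure-preserving transformation that is ergodic, and let s be a positive integer. Then there exist a positive integer l and measurable sets A₁, …, A_l ⊆ X which are pairwise disjoint, whose union is X up to a μ-null set, each satisfying T^{-s}A_i = A_i up to a μ-null set and μ(A_i) = 1/l, such that every f ∈ L^∞(μ) with f∘T^{s} = f μ-a.e. satisfies f(x) = l ∑_{i=1}^{l} 1_{A_i}(x) ∫_{A_i} f dμ for μ-a.e. x ∈ X; equivalently, f(x) = ∫ f(y) K(x,y) dμ(y) μ-a.e., where K(x,y) = l ∑_{i=1}^{l} 1_{A_i}(x) 1_{A_i}(y). -/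

import Mathlib

open MeasureTheory Filter

open MeasureTheory Filter Set
open scoped ENNReal symmDiff

section FWaux

variable {X : Type*} [MeasurableSpace X] {μ : Measure X} {T : X → X}

private lemma fw_preimage_ae_eq {g : X → X} (hg : Measure.QuasiMeasurePreserving g μ μ)
    {A B : Set X} (h : A =ᵐ[μ] B) : g ⁻¹' A =ᵐ[μ] g ⁻¹' B := by
  rw [← measure_symmDiff_eq_zero_iff] at h ⊢
  rw [← Set.preimage_symmDiff]
  exact hg.preimage_null h

private lemma fw_union_ae (hT : MeasurePreserving T μ μ) {A : Set X} {n : ℕ} (hn : 0 < n)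
    (hA : T^[n] ⁻¹' A =ᵐ[μ] A) :
    T ⁻¹' (⋃ j ∈ Finset.range n, T^[j] ⁻¹' A) =ᵐ[μ] (⋃ j ∈ Finset.range n, T^[j] ⁻¹' A) := by
  rw [← measure_symmDiff_eq_zero_iff] at hA ⊢
  refine measure_mono_null ?_ hA
  intro x hx
  have key : ∀ y, (y ∈ T ⁻¹' (⋃ j ∈ Finset.range n, T^[j] ⁻¹' A)) ↔
      ∃ j < n, y ∈ T^[j+1] ⁻¹' A := by
    intro y
    simp only [Set.preimage_iUnion, Set.mem_iUnion, Finset.mem_range, exists_prop]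
    constructor
    · rintro ⟨j, hj, hyj⟩
      exact ⟨j, hj, by simpa [Function.iterate_succ] using hyj⟩
    · rintro ⟨j, hj, hyj⟩
      exact ⟨j, hj, by simpa [Function.iterate_succ] using hyj⟩
  have keyU : ∀ y, (y ∈ ⋃ j ∈ Finset.range n, T^[j] ⁻¹' A) ↔ ∃ j < n, y ∈ T^[j] ⁻¹' A := by
    intro y; simp [Set.mem_iUnion]
  rcases hx with hx | hx
  · obtain ⟨j, hj, hxj⟩ := (key x).mp hx.1
    have hxU := hx.2
    rw [keyU] at hxU; push_neg at hxU
    have hj1 : j + 1 = n := by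
      by_contra h
      exact hxU (j+1) (lt_of_le_of_ne hj h) hxj
    have hx0 : x ∉ A := by
      have := hxU 0 hn
      simpa using this
    exact Or.inl ⟨by rwa [hj1] at hxj, hx0⟩
  · obtain ⟨j, hj, hxj⟩ := (keyU x).mp hx.1
    have hxU := hx.2
    rw [key] at hxU; push_neg at hxU
    have hne : ∀ k < n, x ∉ T^[k + 1] ⁻¹' A := by
      intro k hk hxk
      exact hxU k hk hxk
    have hj0 : j = 0 := by
      by_contra h
      obtain ⟨k, rfl⟩ := Nat.exists_eq_succ_of_ne_zero h
      exact hne k (lt_trans (Nat.lt_succ_self k) hj) hxj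
    subst hj0
    have hxn : x ∉ T^[n] ⁻¹' A := by
      obtain ⟨k, rfl⟩ := Nat.exists_eq_succ_of_ne_zero (Nat.pos_iff_ne_zero.mp hn)
      exact hne k (Nat.lt_succ_self k)
    exact Or.inr ⟨by simpa using hxj, hxn⟩

private lemma fw_union_conull (hT : Ergodic T μ) {A : Set X} (hAm : MeasurableSet A) {n : ℕ}
    (hn : 0 < n) (hA : T^[n] ⁻¹' A =ᵐ[μ] A) (h0 : μ A ≠ 0) :
    μ (⋃ j ∈ Finset.range n, T^[j] ⁻¹' A)ᶜ = 0 := by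
  have hTm : Measurable T := hT.toMeasurePreserving.measurable
  have hUm : MeasurableSet (⋃ j ∈ Finset.range n, T^[j] ⁻¹' A) := by
    exact MeasurableSet.biUnion (Finset.range n).countable_toSet
      (fun j _ => hAm.preimage (hTm.iterate j))
  rcases hT.quasiErgodic.ae_empty_or_univ₀ hUm.nullMeasurableSet
      (fw_union_ae hT.toMeasurePreserving hn hA) with h | h
  · exfalso
    apply h0
    have hAU : A ⊆ ⋃ j ∈ Finset.range n, T^[j] ⁻¹' A := by
      intro x hx
      exact Set.mem_biUnion (Finset.mem_range.mpr hn) (by simpa using hx)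
    exact measure_mono_null hAU (ae_eq_empty.mp h)
  · exact ae_eq_univ.mp h

private lemma fw_lower [IsProbabilityMeasure μ] (hT : Ergodic T μ) {A : Set X}
    (hAm : MeasurableSet A) {n : ℕ} (hn : 0 < n) (hA : T^[n] ⁻¹' A =ᵐ[μ] A) (h0 : μ A ≠ 0) :
    1 ≤ n * μ A := by
  have hTm : Measurable T := hT.toMeasurePreserving.measurable
  have h1 : μ (⋃ j ∈ Finset.range n, T^[j] ⁻¹' A) = 1 := by
    have := fw_union_conull hT hAm hn hA h0
    have hUm : MeasurableSet (⋃ j ∈ Finset.range n, T^[j] ⁻¹' A) :=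
      MeasurableSet.biUnion (Finset.range n).countable_toSet
        (fun j _ => hAm.preimage (hTm.iterate j))
    exact (prob_compl_eq_zero_iff hUm).mp this
  calc (1 : ℝ≥0∞) = μ (⋃ j ∈ Finset.range n, T^[j] ⁻¹' A) := h1.symm
    _ ≤ ∑ j ∈ Finset.range n, μ (T^[j] ⁻¹' A) := measure_biUnion_finset_le _ _
    _ = ∑ _j ∈ Finset.range n, μ A := by
        refine Finset.sum_congr rfl fun j _ => ?_
        exact (hT.toMeasurePreserving.iterate j).measure_preimage hAm.nullMeasurableSet
    _ = n * μ A := by simp [Finset.sum_const, mul_comm]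


private lemma fw_atom {g : X → X} {m : ℝ≥0∞} {C D : Set X}
    (hm : ∀ E : Set X, MeasurableSet E → g ⁻¹' E =ᵐ[μ] E → μ E ≠ 0 → m ≤ μ E)
    (hC : MeasurableSet C) (hC' : g ⁻¹' C =ᵐ[μ] C)
    (hD : MeasurableSet D) (hD' : g ⁻¹' D =ᵐ[μ] D)
    (hCD : μ C = μ D) (h2 : μ C < 2 * m) : μ (C ∩ D) = 0 ∨ C =ᵐ[μ] D := by
  by_cases h : μ (C ∩ D) = 0
  · exact Or.inl h
  right
  have hmain : ∀ E F : Set X, MeasurableSet E → MeasurableSet F → g ⁻¹' E =ᵐ[μ] E →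
      g ⁻¹' F =ᵐ[μ] F → μ E < 2 * m → μ (E ∩ F) ≠ 0 → μ (E \ F) = 0 := by
    intro E F hE hF hE' hF' hlt hne
    by_contra hdne
    have h1 : m ≤ μ (E ∩ F) := hm _ (hE.inter hF) (by
      rw [Set.preimage_inter]; exact Filter.EventuallyEq.inter hE' hF') hne
    have h2' : m ≤ μ (E \ F) := hm _ (hE.diff hF) (by
      rw [Set.preimage_diff]; exact Filter.EventuallyEq.diff hE' hF') hdne
    have : 2 * m ≤ μ E := by
      rw [two_mul, ← measure_inter_add_diff E hF]
      exact add_le_add h1 h2'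
    exact absurd (lt_of_le_of_lt this hlt) (lt_irrefl _)
  have hCD0 : μ (C \ D) = 0 := hmain C D hC hD hC' hD' h2 h
  have hDC0 : μ (D \ C) = 0 := by
    refine hmain D C hD hC hD' hC' (hCD ▸ h2) ?_
    rwa [Set.inter_comm]
  rw [← measure_symmDiff_eq_zero_iff]
  rw [Set.symmDiff_def]
  exact le_antisymm (le_trans (measure_union_le _ _) (by rw [hCD0, hDC0]; simp)) zero_le

private lemma fw_const [IsProbabilityMeasure μ] {g : X → X} {A : Set X} {f : X → ℝ} {M : ℝ}
    (hatom : ∀ E : Set X, MeasurableSet E → g ⁻¹' E =ᵐ[μ] E → μ (E ∩ A) = 0 ∨ μ (A \ E) = 0)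
    (hA0 : μ A ≠ 0)
    (hf : Measurable f) (hbd : ∀ x, |f x| ≤ M) (hinv : ∀ᵐ x ∂μ, f (g x) = f x) :
    ∃ c : ℝ, μ (A ∩ {x | f x ≠ c}) = 0 := by
  -- the superlevel sets are a.e. invariant
  have hSinv : ∀ c : ℝ, g ⁻¹' (f ⁻¹' Set.Ioi c) =ᵐ[μ] f ⁻¹' Set.Ioi c := by
    intro c
    rw [← measure_symmDiff_eq_zero_iff]
    have hsub : (g ⁻¹' (f ⁻¹' Set.Ioi c)) ∆ (f ⁻¹' Set.Ioi c) ⊆ {x | f (g x) ≠ f x} := by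
      intro x hx
      rcases hx with ⟨hx1, hx2⟩ | ⟨hx1, hx2⟩
      · intro hEq
        exact hx2 (by simpa [Set.mem_preimage, ← hEq] using hx1)
      · intro hEq
        exact hx2 (by simpa [Set.mem_preimage, hEq] using hx1)
    exact measure_mono_null hsub (ae_iff.mp hinv)
  have hD : ∀ c : ℝ, μ (f ⁻¹' Set.Ioi c ∩ A) = 0 ∨ μ (A \ f ⁻¹' Set.Ioi c) = 0 :=
    fun c => hatom _ (hf measurableSet_Ioi) (hSinv c)
  set Sg : Set ℝ := {c : ℝ | μ (A \ f ⁻¹' Set.Ioi c) = 0} with hSg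
  have hne : (-(M+1)) ∈ Sg := by
    have : A \ f ⁻¹' Set.Ioi (-(M+1)) = ∅ := by
      ext x
      simp only [Set.mem_diff, Set.mem_preimage, Set.mem_Ioi, Set.mem_empty_iff_false,
        iff_false, not_and, not_not]
      intro _
      have := hbd x
      have : -M ≤ f x := by cases abs_le.mp (hbd x); linarith
      linarith
    show μ (A \ f ⁻¹' Set.Ioi (-(M+1))) = 0
    rw [this]; simp
  have hbdd : BddAbove Sg := by
    refine ⟨M, fun c hc => ?_⟩
    by_contra hcM
    push_neg at hcM
    have : A \ f ⁻¹' Set.Ioi c = A := by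
      ext x
      simp only [Set.mem_diff, Set.mem_preimage, Set.mem_Ioi]
      constructor
      · exact fun h => h.1
      · intro hx
        refine ⟨hx, fun hgt => ?_⟩
        have := (abs_le.mp (hbd x)).2
        linarith
    rw [hSg] at hc
    simp only [Set.mem_setOf_eq, this] at hc
    exact hA0 hc
  set c₀ : ℝ := sSup Sg with hc₀
  refine ⟨c₀, ?_⟩
  have hlow : ∀ q : ℝ, q < c₀ → μ (A \ f ⁻¹' Set.Ioi q) = 0 := by
    intro q hq
    obtain ⟨c', hc', hqc'⟩ := exists_lt_of_lt_csSup ⟨_, hne⟩ hq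
    refine measure_mono_null ?_ hc'
    intro x hx
    exact ⟨hx.1, fun h => hx.2 (Set.mem_preimage.mpr (lt_trans hqc' h))⟩
  have hhigh : ∀ q : ℝ, c₀ < q → μ (f ⁻¹' Set.Ioi q ∩ A) = 0 := by
    intro q hq
    rcases hD q with h | h
    · exact h
    · exact absurd (le_csSup hbdd h) (not_le.mpr hq)
  -- countable union over rationals
  have hsub : A ∩ {x | f x ≠ c₀} ⊆
      (⋃ q : ℚ, if c₀ < (q:ℝ) then f ⁻¹' Set.Ioi (q:ℝ) ∩ A else ∅) ∪
      (⋃ q : ℚ, if (q:ℝ) < c₀ then A \ f ⁻¹' Set.Ioi (q:ℝ) else ∅) := by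
    rintro x ⟨hxA, hxf⟩
    rcases lt_or_gt_of_ne hxf with hlt | hgt
    · -- f x < c₀
      obtain ⟨q, hq1, hq2⟩ := exists_rat_btwn hlt
      refine Or.inr (Set.mem_iUnion.mpr ⟨q, ?_⟩)
      rw [if_pos hq2]
      exact ⟨hxA, fun h => absurd (Set.mem_preimage.mp h) (not_lt.mpr (le_of_lt hq1))⟩
    · obtain ⟨q, hq1, hq2⟩ := exists_rat_btwn hgt
      refine Or.inl (Set.mem_iUnion.mpr ⟨q, ?_⟩)
      rw [if_pos hq1]
      exact ⟨Set.mem_preimage.mpr hq2, hxA⟩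
  refine measure_mono_null hsub (le_antisymm (le_trans (measure_union_le _ _) ?_) zero_le)
  have h1 : μ (⋃ q : ℚ, if c₀ < (q:ℝ) then f ⁻¹' Set.Ioi (q:ℝ) ∩ A else ∅) = 0 := by
    refine measure_iUnion_null fun q => ?_
    split_ifs with h
    · exact hhigh _ h
    · simp
  have h2 : μ (⋃ q : ℚ, if (q:ℝ) < c₀ then A \ f ⁻¹' Set.Ioi (q:ℝ) else ∅) = 0 := by
    refine measure_iUnion_null fun q => ?_
    split_ifs with h
    · exact hlow _ h
    · simp
  rw [h1, h2]; simp

end FWaux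


/-- the Furstenberg–Weiss integral kernel for `T^s`-invariant functions.
For an ergodic `T` and `s ≥ 1` there are `l ≥ 1` pairwise disjoint measurable sets
`A₁, …, A_l` covering `X` up to a null set, each `T^s`-invariant up to a null set and of
measure `1/l`, such that every bounded measurable `f` with `f ∘ T^s = f` a.e. satisfies
`f(x) = l ∑ᵢ 1_{Aᵢ}(x) ∫_{Aᵢ} f dμ` for a.e. `x` (i.e. `f(x) = ∫ f(y) K(x,y) dμ(y)` with
`K(x,y) = l ∑ᵢ 1_{Aᵢ}(x) 1_{Aᵢ}(y)`). -/
theorem exists_integral_kernel_for_power_invariant_functions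
    {X : Type*} [MeasurableSpace X] (μ : Measure X) [IsProbabilityMeasure μ]
    (T : X → X) (hT : Ergodic T μ) (s : ℕ) (hs : 0 < s) :
    ∃ (l : ℕ) (A : Fin l → Set X), 0 < l ∧
      (∀ i, MeasurableSet (A i)) ∧
      (∀ i j, i ≠ j → Disjoint (A i) (A j)) ∧
      μ (⋃ i, A i)ᶜ = 0 ∧
      (∀ i, μ (symmDiff (T^[s] ⁻¹' A i) (A i)) = 0) ∧
      (∀ i, μ (A i) = 1 / l) ∧
      (∀ f : X → ℝ, Measurable f → (∃ M : ℝ, ∀ x, |f x| ≤ M) →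
        (∀ᵐ x ∂μ, f (T^[s] x) = f x) →
        ∀ᵐ x ∂μ, f x =
          (l : ℝ) * ∑ i : Fin l, (A i).indicator (fun _ => (1 : ℝ)) x * ∫ y in A i, f y ∂μ) := by
  classical
  have hTm : Measurable T := hT.toMeasurePreserving.measurable
  have hMs : MeasurePreserving T^[s] μ μ := hT.toMeasurePreserving.iterate s
  -- the minimal measure of a nontrivial a.e. `T^[s]`-invariant set
  set 𝒮 : Set ℝ≥0∞ :=
    {t | ∃ B : Set X, MeasurableSet B ∧ T^[s] ⁻¹' B =ᵐ[μ] B ∧ μ B = t ∧ t ≠ 0} with h𝒮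
  set m : ℝ≥0∞ := sInf 𝒮 with hm_def
  have hunivmem : (1:ℝ≥0∞) ∈ 𝒮 :=
    ⟨Set.univ, MeasurableSet.univ, by simp, by simp, one_ne_zero⟩
  have hm_le_one : m ≤ 1 := sInf_le hunivmem
  have hm_lb : 1 / (s:ℝ≥0∞) ≤ m := by
    refine le_sInf fun t ht => ?_
    obtain ⟨B, hBm, hBinv, rfl, ht0⟩ := ht
    have h1 := fw_lower hT hBm hs hBinv ht0
    rw [ENNReal.div_le_iff (by exact_mod_cast Nat.pos_iff_ne_zero.mp hs)
      (ENNReal.natCast_ne_top s)]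
    rwa [mul_comm] at h1
  have hm0 : m ≠ 0 := by
    have : (0:ℝ≥0∞) < 1 / (s:ℝ≥0∞) :=
      ENNReal.div_pos one_ne_zero (ENNReal.natCast_ne_top s)
    exact (lt_of_lt_of_le this hm_lb).ne'
  have hmtop : m ≠ ∞ := ne_top_of_le_ne_top ENNReal.one_ne_top hm_le_one
  have hm2 : m < 2 * m := by
    rw [two_mul]; exact ENNReal.lt_add_right hmtop hm0
  have hm_min : ∀ E : Set X, MeasurableSet E → T^[s] ⁻¹' E =ᵐ[μ] E → μ E ≠ 0 → m ≤ μ E :=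
    fun E h1 h2 h3 => sInf_le ⟨E, h1, h2, rfl, h3⟩
  obtain ⟨t, ht, htlt⟩ := sInf_lt_iff.mp (show sInf 𝒮 < 2 * m from hm_def ▸ hm2)
  obtain ⟨C, hCm, hCinv, rfl, hC0⟩ := ht
  -- the orbit of C
  set B : ℕ → Set X := fun j => T^[j] ⁻¹' C with hB
  have hBmeas : ∀ j, MeasurableSet (B j) := fun j => hCm.preimage (hTm.iterate j)
  have hBmeasμ : ∀ j, μ (B j) = μ C := fun j =>
    (hT.toMeasurePreserving.iterate j).measure_preimage hCm.nullMeasurableSet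
  have hBinv : ∀ j, T^[s] ⁻¹' B j =ᵐ[μ] B j := by
    intro j
    have hcomm : T^[s] ⁻¹' (T^[j] ⁻¹' C) = T^[j] ⁻¹' (T^[s] ⁻¹' C) := by
      rw [← Set.preimage_comp, ← Set.preimage_comp, ← Function.iterate_add,
        ← Function.iterate_add, Nat.add_comm]
    show T^[s] ⁻¹' (T^[j] ⁻¹' C) =ᵐ[μ] T^[j] ⁻¹' C
    rw [hcomm]
    exact fw_preimage_ae_eq (hT.toMeasurePreserving.iterate j).quasiMeasurePreserving hCinv
  have hshift : ∀ i k : ℕ, μ (B i ∆ B (i + k)) = μ (C ∆ B k) := by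
    intro i k
    have h1 : B (i + k) = T^[i] ⁻¹' (B k) := by
      show T^[i+k] ⁻¹' C = T^[i] ⁻¹' (T^[k] ⁻¹' C)
      rw [← Set.preimage_comp, ← Function.iterate_add, Nat.add_comm]
    have h2 : B i ∆ (T^[i] ⁻¹' B k) = T^[i] ⁻¹' (C ∆ B k) := by
      rw [Set.preimage_symmDiff]
    rw [h1, h2]
    exact (hT.toMeasurePreserving.iterate i).measure_preimage
      ((hCm.symmDiff (hBmeas k)).nullMeasurableSet)
  -- the period
  have hPex : ∃ n, 0 < n ∧ T^[n] ⁻¹' C =ᵐ[μ] C := ⟨s, hs, hCinv⟩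
  set l := Nat.find hPex with hl_def
  obtain ⟨hl0, hlinv⟩ := Nat.find_spec hPex
  -- pairwise a.e. disjointness
  have hdisj0 : ∀ i j, i < j → j < l → μ (B i ∩ B j) = 0 := by
    intro i j hij hjl
    rcases fw_atom hm_min (hBmeas i) (hBinv i) (hBmeas j) (hBinv j)
      (by rw [hBmeasμ, hBmeasμ]) (by rw [hBmeasμ]; exact htlt) with h | h
    · exact h
    · exfalso
      refine Nat.find_min hPex (show j - i < l by omega) ⟨by omega, ?_⟩
      have h3 := hshift i (j - i)
      rw [Nat.add_sub_cancel' (le_of_lt hij)] at h3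
      rw [← measure_symmDiff_eq_zero_iff] at h
      rw [h] at h3
      have : C =ᵐ[μ] B (j - i) := measure_symmDiff_eq_zero_iff.mp h3.symm
      exact this.symm
  have hconull : μ (⋃ j ∈ Finset.range l, B j)ᶜ = 0 :=
    fw_union_conull hT hCm hl0 hlinv hC0
  -- disjointified sets
  set A' : Fin l → Set X := fun i => B i.val \ ⋃ j ∈ Finset.range i.val, B j with hA'
  have hA'm : ∀ i, MeasurableSet (A' i) := fun i =>
    (hBmeas i.val).diff (MeasurableSet.biUnion (Finset.range i.val).countable_toSet
      (fun j _ => hBmeas j))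
  have hd : ∀ i j : Fin l, i < j → Disjoint (A' i) (A' j) := by
    intro i j hij
    rw [Set.disjoint_left]
    intro x hxi hxj
    exact hxj.2 (Set.mem_biUnion (Finset.mem_range.mpr hij) hxi.1)
  have hdisjall : ∀ i j : Fin l, i ≠ j → Disjoint (A' i) (A' j) := by
    intro i j hij
    rcases lt_or_gt_of_ne hij with h | h
    · exact hd i j h
    · exact (hd j i h).symm
  have hAeq : ∀ i : Fin l, A' i =ᵐ[μ] B i.val := by
    intro i
    rw [← measure_symmDiff_eq_zero_iff]
    have hsub : (A' i) ∆ (B i.val) ⊆ ⋃ j ∈ Finset.range i.val, (B j ∩ B i.val) := by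
      intro x hx
      rcases hx with ⟨hx1, hx2⟩ | ⟨hx1, hx2⟩
      · exact absurd hx1.1 hx2
      · have hxu : x ∈ ⋃ j ∈ Finset.range i.val, B j := by
          by_contra h
          exact hx2 ⟨hx1, h⟩
        simp only [Set.mem_iUnion, Finset.mem_range, exists_prop] at hxu
        obtain ⟨j, hj, hxj⟩ := hxu
        exact Set.mem_biUnion (Finset.mem_range.mpr hj) (⟨hxj, hx1⟩ : x ∈ B j ∩ B i.val)
    refine measure_mono_null hsub ?_
    refine le_antisymm (le_trans (measure_biUnion_finset_le _ _) ?_) zero_le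
    have : ∀ j ∈ Finset.range i.val, μ (B j ∩ B i.val) = 0 := fun j hj =>
      hdisj0 j i.val (Finset.mem_range.mp hj) i.isLt
    rw [Finset.sum_congr rfl this]
    simp
  -- invariance of the pieces
  have hA'inv : ∀ i : Fin l, T^[s] ⁻¹' (A' i) =ᵐ[μ] A' i := by
    intro i
    exact ((fw_preimage_ae_eq hMs.quasiMeasurePreserving (hAeq i)).trans
      (hBinv i.val)).trans (hAeq i).symm
  have hA'meas : ∀ i : Fin l, μ (A' i) = μ C := by
    intro i
    rw [measure_congr (hAeq i), hBmeasμ]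
  -- the union is conull
  have hUsub : (⋃ j ∈ Finset.range l, B j) ⊆ ⋃ i : Fin l, A' i := by
    intro x hx
    simp only [Set.mem_iUnion, Finset.mem_range, exists_prop] at hx
    obtain ⟨j, hjl, hxj⟩ := hx
    have hex : ∃ k, x ∈ B k := ⟨j, hxj⟩
    have hfind_lt : Nat.find hex < l := lt_of_le_of_lt (Nat.find_min' hex hxj) hjl
    refine Set.mem_iUnion.mpr ⟨⟨Nat.find hex, hfind_lt⟩, ?_⟩
    refine ⟨Nat.find_spec hex, ?_⟩
    intro hmem
    simp only [Set.mem_iUnion, Finset.mem_range, exists_prop] at hmem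
    obtain ⟨k, hk, hxk⟩ := hmem
    exact absurd hxk (Nat.find_min hex hk)
  have hUconull : μ (⋃ i : Fin l, A' i)ᶜ = 0 :=
    measure_mono_null (Set.compl_subset_compl.mpr hUsub) hconull
  -- measure of each piece
  have hU1 : μ (⋃ i : Fin l, A' i) = 1 :=
    (prob_compl_eq_zero_iff (MeasurableSet.iUnion fun i => hA'm i)).mp hUconull
  have hlC : (l : ℝ≥0∞) * μ C = 1 := by
    have hsum : ∑ i : Fin l, μ (A' i) = 1 := by
      rw [← tsum_fintype (L := SummationFilter.unconditional _), ← measure_iUnion ?_ (fun i => hA'm i), hU1]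
      intro i j hij
      exact hdisjall i j hij
    rw [Finset.sum_congr rfl (fun i _ => hA'meas i), Finset.sum_const] at hsum
    simpa [nsmul_eq_mul] using hsum
  have hl_ne : (l : ℝ≥0∞) ≠ 0 := by exact_mod_cast Nat.pos_iff_ne_zero.mp hl0
  have hμC : μ C = 1 / (l : ℝ≥0∞) :=
    (ENNReal.eq_div_iff hl_ne (ENNReal.natCast_ne_top l)).mpr hlC
  refine ⟨l, A', hl0, hA'm, hdisjall, hUconull, ?_, ?_, ?_⟩
  · intro i
    exact measure_symmDiff_eq_zero_iff.mpr (hA'inv i)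
  · intro i
    rw [hA'meas i, hμC]
  -- the integral kernel identity
  intro f hfm hbd hfinv
  obtain ⟨M, hM⟩ := hbd
  have hc : ∀ i : Fin l, ∃ c : ℝ, μ (A' i ∩ {x | f x ≠ c}) = 0 := by
    intro i
    refine fw_const (g := T^[s]) ?_ ?_ hfm hM hfinv
    · intro E hE hE'
      by_cases h1 : μ (E ∩ A' i) = 0
      · exact Or.inl h1
      by_cases h2 : μ (A' i \ E) = 0
      · exact Or.inr h2
      exfalso
      have k1 : m ≤ μ (E ∩ A' i) := hm_min _ (hE.inter (hA'm i)) (by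
        rw [Set.preimage_inter]
        exact Filter.EventuallyEq.inter hE' (hA'inv i)) h1
      have k2 : m ≤ μ (A' i \ E) := hm_min _ ((hA'm i).diff hE) (by
        rw [Set.preimage_diff]
        exact Filter.EventuallyEq.diff (hA'inv i) hE') h2
      have hge : 2 * m ≤ μ (A' i) := by
        rw [two_mul, ← measure_inter_add_diff (A' i) hE, Set.inter_comm]
        exact add_le_add k1 k2
      rw [hA'meas i] at hge
      exact absurd (lt_of_le_of_lt hge htlt) (lt_irrefl _)
    · rw [hA'meas i]; exact hC0
  choose c hc using hc
  have h1 : ∀ᵐ x ∂μ, x ∈ ⋃ i : Fin l, A' i := by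
    rw [ae_iff]
    exact hUconull
  have h2 : ∀ᵐ x ∂μ, ∀ i : Fin l, x ∈ A' i → f x = c i := by
    rw [ae_all_iff]
    intro i
    rw [ae_iff]
    refine measure_mono_null ?_ (hc i)
    intro x hx
    rw [Set.mem_setOf_eq, Classical.not_imp] at hx
    exact ⟨hx.1, hx.2⟩
  have hl_ne' : (l : ℝ) ≠ 0 := by exact_mod_cast Nat.pos_iff_ne_zero.mp hl0
  have hint : ∀ j : Fin l, ∫ y in A' j, f y ∂μ = (1 / (l : ℝ)) * c j := by
    intro j
    have hrest : ∀ᵐ y ∂μ.restrict (A' j), f y = c j := by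
      rw [ae_restrict_iff' (hA'm j), ae_iff]
      refine measure_mono_null ?_ (hc j)
      intro y hy
      rw [Set.mem_setOf_eq, Classical.not_imp] at hy
      exact ⟨hy.1, hy.2⟩
    have : ∫ y in A' j, f y ∂μ = ∫ _ in A' j, c j ∂μ :=
      integral_congr_ae hrest
    rw [this, setIntegral_const, measureReal_def, hA'meas j, hμC]
    rw [smul_eq_mul]
    congr 1
    rw [ENNReal.toReal_div]
    simp
  filter_upwards [h1, h2] with x hx1 hx2
  obtain ⟨i, hxi⟩ := Set.mem_iUnion.mp hx1
  rw [hx2 i hxi]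
  rw [Finset.sum_eq_single i]
  · rw [Set.indicator_of_mem hxi, hint i]
    field_simp
  · intro j _ hji
    rw [Set.indicator_of_notMem]
    · ring
    · exact Set.disjoint_left.mp (hdisjall i j hji.symm) hxi
  · intro h
    exact absurd (Finset.mem_univ i) h
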